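/- For the monomial μ(y) = (y₁/h)^{α₁} (y₂/h)^{α₂} with α₁, α₂ nonnegative even integers, the operator value B(0, τ)μ = (τ/2π) ∫_{|z|<1} μ(cτz)/√(1-|z|²) dz equals τ/(α₁+α₂+1) times (α₁-1)!!(α₂-1)!!/(α₁+α₂-1)!! · λ^{α₁+α₂}, where λ = cτ/h. -/

import Mathlib

open MeasureTheory Real Nat

open intervalIntegral

lemma DF.odd_succ (m : ℕ) : (2*m+1)‼ = (2*m+1) * (2*m-1)‼ := by
  rw [Nat.doubleFactorial_add_one]

lemma DF.prod_odd (p : ℕ) :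
    (∏ i ∈ Finset.range p, (2*(i:ℝ)+1)/(2*i+2)) = ((2*p-1)‼ : ℝ)/((2*p)‼ : ℝ) := by
  induction p with
  | zero => simp
  | succ p ih =>
    rw [Finset.prod_range_succ, ih]
    have h1 : 2*(p+1) = (2*p)+2 := by ring
    rw [h1, Nat.doubleFactorial_add_two]
    have h2 : 2*p+2-1 = 2*p+1 := by omega
    rw [h2, DF.odd_succ]
    have e1 : ((2*p)‼ : ℝ) ≠ 0 := Nat.cast_ne_zero.2 (Nat.doubleFactorial_pos _).ne'
    have e2 : ((2*p-1)‼ : ℝ) ≠ 0 := Nat.cast_ne_zero.2 (Nat.doubleFactorial_pos _).ne'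
    push_cast
    field_simp

lemma sinpow_odd (q : ℕ) :
    ∫ x in (0:ℝ)..(π/2), sin x ^ (2*q+1) = ((2*q)‼ : ℝ)/((2*q+1)‼ : ℝ) := by
  induction q with
  | zero => simp [integral_sin]
  | succ q ih =>
    have h1 : 2*(q+1)+1 = (2*q+1)+2 := by ring
    have h2 : 2*(q+1) = (2*q)+2 := by ring
    rw [h1, integral_sin_pow, ih, h2, Nat.doubleFactorial_add_two,
      Nat.doubleFactorial_add_two]
    simp only [Real.sin_zero, Real.cos_pi_div_two, ne_eq, AddLeftCancelMonoid.add_eq_zero,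
      one_ne_zero, and_false, not_false_eq_true, zero_pow, zero_mul, mul_zero, sub_zero, zero_div,
      zero_add]
    have e1 : ((2*q+1)‼ : ℝ) ≠ 0 := Nat.cast_ne_zero.2 (Nat.doubleFactorial_pos _).ne'
    have e0 : ((2*q)‼ : ℝ) ≠ 0 := Nat.cast_ne_zero.2 (Nat.doubleFactorial_pos _).ne'
    push_cast
    field_simp
    ring_nf

lemma arcsin_image : Real.arcsin '' (Set.Ioo (0:ℝ) 1) = Set.Ioo 0 (π/2) := by
  ext u
  constructor
  · rintro ⟨r, ⟨hr0, hr1⟩, rfl⟩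
    exact ⟨Real.arcsin_pos.2 hr0, Real.arcsin_lt_pi_div_two.2 hr1⟩
  · rintro ⟨hu0, hu1⟩
    refine ⟨Real.sin u, ⟨Real.sin_pos_of_pos_of_lt_pi hu0 (by linarith [Real.pi_pos]), ?_⟩,
      Real.arcsin_sin (by linarith) (le_of_lt hu1)⟩
    calc Real.sin u < Real.sin (π/2) := by
          apply Real.strictMonoOn_sin ⟨by linarith, le_of_lt hu1⟩ ⟨by linarith [Real.pi_pos], le_refl _⟩ hu1
      _ = 1 := Real.sin_pi_div_two

lemma radial (n : ℕ) :
    ∫ r in Set.Ioo (0:ℝ) 1, r^(2*n+1) / Real.sqrt (1 - r^2) = ((2*n)‼ : ℝ)/((2*n+1)‼ : ℝ) := by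
  have key := integral_image_eq_integral_abs_deriv_smul (f := Real.arcsin)
    (f' := fun x => 1 / Real.sqrt (1 - x^2)) (s := Set.Ioo (0:ℝ) 1) measurableSet_Ioo
    (fun x hx => (Real.hasDerivAt_arcsin (by linarith [hx.1] : x ≠ -1)
      (ne_of_lt hx.2)).hasDerivWithinAt)
    (Real.injOn_arcsin.mono (fun x hx => Set.mem_Icc.2 ⟨by linarith [(Set.mem_Ioo.1 hx).1], (Set.mem_Ioo.1 hx).2.le⟩))
    (fun u => Real.sin u ^ (2*n+1))
  rw [arcsin_image] at key
  have e2 : ∫ x in Set.Ioo (0:ℝ) 1, |1 / Real.sqrt (1 - x^2)| • Real.sin (Real.arcsin x) ^ (2*n+1)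
      = ∫ r in Set.Ioo (0:ℝ) 1, r^(2*n+1) / Real.sqrt (1 - r^2) := by
    apply setIntegral_congr_fun measurableSet_Ioo
    intro x hx
    have h1 : Real.sin (Real.arcsin x) = x := Real.sin_arcsin (by linarith [hx.1]) (le_of_lt hx.2)
    have h2 : (0:ℝ) < Real.sqrt (1 - x^2) := Real.sqrt_pos.2 (by nlinarith [hx.1, hx.2])
    simp only [smul_eq_mul, h1, abs_of_pos (show (0:ℝ) < |1 / Real.sqrt (1 - x^2)|/1*1 from by positivity) ]
    rw [abs_of_pos (by positivity : (0:ℝ) < 1 / Real.sqrt (1 - x^2))]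
    ring
  rw [e2] at key
  rw [← key, ← sinpow_odd n, intervalIntegral.integral_of_le (by positivity),
    MeasureTheory.integral_Ioc_eq_integral_Ioo]

lemma ang_base (p : ℕ) :
    ∫ θ in (-π)..π, Real.cos θ ^ (2*p) = 2*π*((2*p-1)‼ : ℝ)/((2*p)‼ : ℝ) := by
  have hper : Function.Periodic (fun x => Real.sin x ^ (2*p)) π := by
    intro x
    simp only [Real.sin_add_pi]
    exact (even_two_mul p).neg_pow _
  have hint : IntervalIntegrable (fun x => Real.sin x ^ (2*p)) volume 0 π :=
    (Real.continuous_sin.pow _).intervalIntegrable _ _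
  have h1 : ∫ θ in (-π)..π, Real.cos θ ^ (2*p)
      = ∫ u in (-(π/2))..(3*π/2), Real.sin u ^ (2*p) := by
    have := intervalIntegral.integral_comp_add_right (a := -π) (b := π)
      (fun u => Real.sin u ^ (2*p)) (π/2)
    simp only [Real.sin_add_pi_div_two] at this
    rw [this]
    ring_nf
  have h2 : ∫ u in (-(π/2))..(3*π/2), Real.sin u ^ (2*p)
      = (∫ u in (-(π/2))..(π/2), Real.sin u ^ (2*p)) + ∫ u in (π/2)..(3*π/2), Real.sin u ^ (2*p) :=
    (intervalIntegral.integral_add_adjacent_intervals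
      ((Real.continuous_sin.pow _).intervalIntegrable _ _)
      ((Real.continuous_sin.pow _).intervalIntegrable _ _)).symm
  have h3 : ∫ u in (-(π/2))..(π/2), Real.sin u ^ (2*p) = ∫ u in (0:ℝ)..π, Real.sin u ^ (2*p) := by
    have := hper.intervalIntegral_add_eq (-(π/2)) 0
    simp only [zero_add] at this
    rw [← this]
    congr 1
    ring
  have h4 : ∫ u in (π/2)..(3*π/2), Real.sin u ^ (2*p) = ∫ u in (0:ℝ)..π, Real.sin u ^ (2*p) := by
    have := hper.intervalIntegral_add_eq (π/2) 0
    simp only [zero_add] at this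
    rw [← this]
    congr 1
    ring
  rw [h1, h2, h3, h4, integral_sin_pow_even, DF.prod_odd]
  ring

lemma ang_rec (a b : ℕ) :
    ((a:ℝ)+b+2) * ∫ θ in (-π)..π, Real.cos θ ^ a * Real.sin θ ^ (b+2)
      = ((b:ℝ)+1) * ∫ θ in (-π)..π, Real.cos θ ^ a * Real.sin θ ^ b := by
  have hd : ∀ θ ∈ Set.uIcc (-π) π, HasDerivAt (fun t => Real.cos t ^ (a+1) * Real.sin t ^ (b+1))
      (-((a:ℝ)+1) * (Real.cos θ ^ a * Real.sin θ ^ (b+2))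
        + ((b:ℝ)+1) * (Real.cos θ ^ a * Real.sin θ ^ b - Real.cos θ ^ a * Real.sin θ ^ (b+2))) θ := by
    intro θ _
    have h1 := ((Real.hasDerivAt_cos θ).pow (a+1)).mul ((Real.hasDerivAt_sin θ).pow (b+1))
    refine h1.congr_deriv ?_
    symm
    have hpyth : Real.sin θ ^ 2 = 1 - Real.cos θ ^ 2 := by
      have := Real.sin_sq_add_cos_sq θ; linarith
    simp only [Nat.add_sub_cancel, Pi.pow_apply] at *
    push_cast
    linear_combination -((b:ℝ)+1) * Real.cos θ ^ a * Real.sin θ ^ b * (Real.sin_sq_add_cos_sq θ)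
  have key := intervalIntegral.integral_eq_sub_of_hasDerivAt hd
    (((continuous_const.mul ((Real.continuous_cos.pow _).mul (Real.continuous_sin.pow _))).add
      (continuous_const.mul (((Real.continuous_cos.pow _).mul (Real.continuous_sin.pow _)).sub
        ((Real.continuous_cos.pow _).mul (Real.continuous_sin.pow _))))).intervalIntegrable _ _)
  simp only [Real.sin_pi, Real.sin_neg, Real.sin_pi, neg_zero] at key
  rw [zero_pow (Nat.succ_ne_zero b), mul_zero, mul_zero, sub_zero] at key
  have hi1 : IntervalIntegrable (fun θ => Real.cos θ ^ a * Real.sin θ ^ (b+2)) volume (-π) π :=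
    ((Real.continuous_cos.pow _).mul (Real.continuous_sin.pow _)).intervalIntegrable _ _
  have hi0 : IntervalIntegrable (fun θ => Real.cos θ ^ a * Real.sin θ ^ b) volume (-π) π :=
    ((Real.continuous_cos.pow _).mul (Real.continuous_sin.pow _)).intervalIntegrable _ _
  rw [intervalIntegral.integral_add ((hi1).const_mul _) (((hi0).sub hi1).const_mul _),
    intervalIntegral.integral_const_mul, intervalIntegral.integral_const_mul,
    intervalIntegral.integral_sub hi0 hi1] at key
  linarith [key]

lemma ang (p q : ℕ) :
    ∫ θ in (-π)..π, Real.cos θ ^ (2*p) * Real.sin θ ^ (2*q)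
      = 2*π*(((2*p-1)‼ : ℝ) * ((2*q-1)‼ : ℝ))/((2*p+2*q)‼ : ℝ) := by
  induction q with
  | zero =>
    simp only [Nat.mul_zero, pow_zero, mul_one, Nat.add_zero]
    rw [ang_base]
    norm_num
  | succ q ih =>
    have h2 : 2*(q+1) = (2*q)+2 := by ring
    have key := ang_rec (2*p) (2*q)
    rw [ih] at key
    rw [h2]
    have hne : ((2*p:ℝ)+(2*q)+2) ≠ 0 := by positivity
    have heq : ∫ θ in (-π)..π, Real.cos θ ^ (2*p) * Real.sin θ ^ (2*q+2)
        = ((2*q:ℝ)+1) * (2*π*(((2*p-1)‼ : ℝ) * ((2*q-1)‼ : ℝ))/((2*p+2*q)‼ : ℝ)) / ((2*p:ℝ)+(2*q)+2) := by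
      field_simp at key ⊢
      push_cast at key ⊢
      linarith [key]
    rw [heq]
    have hq1 : (2*q+2-1)‼ = (2*q+1)*(2*q-1)‼ := by
      have : 2*q+2-1 = 2*q+1 := by omega
      rw [this, DF.odd_succ]
    have hq2 : (2*p+(2*q+2))‼ = (2*p+2*q+2)*(2*p+2*q)‼ := by
      have : 2*p+(2*q+2) = (2*p+2*q)+2 := by ring
      rw [this, Nat.doubleFactorial_add_two]
    rw [hq1, hq2]
    have e1 : ((2*p+2*q)‼ : ℝ) ≠ 0 := Nat.cast_ne_zero.2 (Nat.doubleFactorial_pos _).ne'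
    push_cast
    field_simp

lemma disk_integral (p q : ℕ) :
    ∫ z in {z : ℝ × ℝ | z.1 ^ 2 + z.2 ^ 2 < 1},
        z.1 ^ (2*p) * z.2 ^ (2*q) / Real.sqrt (1 - (z.1 ^ 2 + z.2 ^ 2))
      = (((2*(p+q))‼ : ℝ)/((2*(p+q)+1)‼ : ℝ))
          * (2*π*(((2*p-1)‼ : ℝ) * ((2*q-1)‼ : ℝ))/((2*p+2*q)‼ : ℝ)) := by
  set D : Set (ℝ × ℝ) := {z : ℝ × ℝ | z.1 ^ 2 + z.2 ^ 2 < 1} with hD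
  have hDm : MeasurableSet D :=
    (isOpen_lt (by fun_prop) continuous_const).measurableSet
  set g : ℝ × ℝ → ℝ :=
    fun z => z.1 ^ (2*p) * z.2 ^ (2*q) / Real.sqrt (1 - (z.1 ^ 2 + z.2 ^ 2)) with hg
  rw [← MeasureTheory.integral_indicator hDm, ← integral_comp_polarCoord_symm (D.indicator g)]
  have hcong : ∀ x ∈ polarCoord.target,
      x.1 • D.indicator g (polarCoord.symm x)
        = (Set.indicator (Set.Ioo (0:ℝ) 1) (fun r => r^(2*(p+q)+1) / Real.sqrt (1 - r^2)) x.1)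
            * (Real.cos x.2 ^ (2*p) * Real.sin x.2 ^ (2*q)) := by
    rintro ⟨r, θ⟩ hx
    rw [polarCoord_target] at hx
    obtain ⟨hr, hθ⟩ := hx
    have hr0 : (0:ℝ) < r := hr
    have hsq : (r * Real.cos θ)^2 + (r * Real.sin θ)^2 = r^2 := by
      have := Real.sin_sq_add_cos_sq θ
      ring_nf
      nlinarith [this]
    by_cases h1 : r < 1
    · have hmem : polarCoord.symm (r, θ) ∈ D := by
        rw [polarCoord_symm_apply]
        simp only [hD, Set.mem_setOf_eq]
        rw [hsq]
        nlinarith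
      rw [Set.indicator_of_mem hmem, Set.indicator_of_mem (Set.mem_Ioo.2 ⟨hr0, h1⟩)]
      rw [polarCoord_symm_apply, hg]
      simp only [smul_eq_mul]
      rw [hsq]
      rw [mul_pow, mul_pow]
      ring
    · have hmem : polarCoord.symm (r, θ) ∉ D := by
        rw [polarCoord_symm_apply]
        simp only [hD, Set.mem_setOf_eq, not_lt]
        rw [hsq]
        nlinarith [not_lt.1 h1]
      rw [Set.indicator_of_notMem hmem, Set.indicator_of_notMem
        (by simp [Set.mem_Ioo]; intro _; linarith [not_lt.1 h1])]
      simp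
  rw [setIntegral_congr_fun polarCoord.open_target.measurableSet hcong]
  rw [polarCoord_target, Measure.volume_eq_prod,
    setIntegral_prod_mul (μ := (volume : Measure ℝ)) (ν := (volume : Measure ℝ))
      ((Set.Ioo (0:ℝ) 1).indicator (fun r => r ^ (2*(p+q)+1) / Real.sqrt (1 - r^2)))
      (fun θ => Real.cos θ ^ (2*p) * Real.sin θ ^ (2*q)) (Set.Ioi 0) (Set.Ioo (-π) π)]
  rw [setIntegral_indicator measurableSet_Ioo,
    Set.inter_eq_self_of_subset_right Set.Ioo_subset_Ioi_self]
  rw [radial (p+q)]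
  rw [← MeasureTheory.integral_Ioc_eq_integral_Ioo,
    ← intervalIntegral.integral_of_le (by linarith [Real.pi_pos] : -π ≤ π), ang p q]

/-- The operator B(x,τ)f = (τ/2π) ∫_{|z|<1} f(x+cτz)/√(1-|z|²) dz. -/
noncomputable def Bop (c τ : ℝ) (x : ℝ × ℝ) (f : ℝ × ℝ → ℝ) : ℝ :=
  (τ / (2 * Real.pi)) * ∫ z in {z : ℝ × ℝ | z.1 ^ 2 + z.2 ^ 2 < 1},
    f (x.1 + c * τ * z.1, x.2 + c * τ * z.2) / Real.sqrt (1 - (z.1 ^ 2 + z.2 ^ 2))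

/-- B(0,τ)μ for μ(y) = (y₁/h)^α₁ (y₂/h)^α₂ with α₁,α₂ even equals
τ/(α₁+α₂+1) · (α₁-1)!!(α₂-1)!!/(α₁+α₂-1)!! · λ^{α₁+α₂}, λ = cτ/h. -/
theorem Bop_monomial_even (c τ h : ℝ) (hc : 0 < c) (hτ : 0 < τ) (hh : 0 < h)
    (α₁ α₂ : ℕ) (h₁ : Even α₁) (h₂ : Even α₂) :
    Bop c τ (0, 0) (fun y => (y.1 / h) ^ α₁ * (y.2 / h) ^ α₂) =
      τ / (α₁ + α₂ + 1) *
        (((α₁ - 1)‼ * (α₂ - 1)‼ : ℝ) / ((α₁ + α₂ - 1)‼ : ℝ) * (c * τ / h) ^ (α₁ + α₂)) := by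
  obtain ⟨p, hp⟩ := h₁
  obtain ⟨q, hq⟩ := h₂
  have hp' : α₁ = 2*p := by omega
  have hq' : α₂ = 2*q := by omega
  subst hp' hq'
  clear hp hq
  set lam : ℝ := c * τ / h with hlam
  have hDm : MeasurableSet {z : ℝ × ℝ | z.1 ^ 2 + z.2 ^ 2 < 1} :=
    (isOpen_lt (by fun_prop) continuous_const).measurableSet
  have hstep : ∫ z in {z : ℝ × ℝ | z.1 ^ 2 + z.2 ^ 2 < 1},
      (((0:ℝ) + c * τ * z.1) / h) ^ (2*p) * (((0:ℝ) + c * τ * z.2) / h) ^ (2*q)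
        / Real.sqrt (1 - (z.1 ^ 2 + z.2 ^ 2))
      = lam ^ (2*p+2*q) * ∫ z in {z : ℝ × ℝ | z.1 ^ 2 + z.2 ^ 2 < 1},
          z.1 ^ (2*p) * z.2 ^ (2*q) / Real.sqrt (1 - (z.1 ^ 2 + z.2 ^ 2)) := by
    rw [← MeasureTheory.integral_const_mul]
    apply setIntegral_congr_fun hDm
    intro z _
    have e1 : ((0:ℝ) + c * τ * z.1) / h = lam * z.1 := by rw [hlam]; field_simp; ring
    have e2 : ((0:ℝ) + c * τ * z.2) / h = lam * z.2 := by rw [hlam]; field_simp; ring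
    dsimp only
    rw [e1, e2, mul_pow, mul_pow, pow_add]
    ring
  show (τ / (2 * Real.pi)) * _ = _
  rw [hstep, disk_integral p q]
  have m := p + q
  have hdf1 : ((2*(p+q))‼ : ℝ) ≠ 0 := Nat.cast_ne_zero.2 (Nat.doubleFactorial_pos _).ne'
  have hdf2 : ((2*(p+q)-1)‼ : ℝ) ≠ 0 := Nat.cast_ne_zero.2 (Nat.doubleFactorial_pos _).ne'
  have hodd : ((2*(p+q)+1)‼ : ℝ) = (2*(p+q)+1) * ((2*(p+q)-1)‼ : ℝ) := by
    rw [DF.odd_succ]; push_cast; ring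
  have hsum : 2*p+2*q = 2*(p+q) := by ring
  rw [hsum, hodd]
  have hπ : Real.pi ≠ 0 := Real.pi_ne_zero
  have hm1 : (2*(p:ℝ)+2*q+1) ≠ 0 := by positivity
  push_cast
  field_simp
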